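/- Let ϕ(t) = -log t + c·(log t · arctan(log t) - (1/2)·log(1 + (log t)²)) with 0 < c < 1/2. Then for all t ∈ (1/4, 4), ϕ''(t) + ϕ'(t)/t > 0. -/

import Mathlib

theorem pseudoconvexity_positivity (c : ℝ) (hc0 : 0 < c) (hc : c < 1 / 2)
    (ϕ : ℝ → ℝ)
    (hϕ : ∀ t : ℝ, ϕ t = -Real.log t
        + c * (Real.log t * Real.arctan (Real.log t)
            - (1 / 2) * Real.log (1 + (Real.log t) ^ 2))) :
    ∀ t : ℝ, 1 / 4 < t → t < 4 →
      deriv (deriv ϕ) t + deriv ϕ t / t > 0 := by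
  have hϕfun : ϕ = fun t => -Real.log t
      + c * (Real.log t * Real.arctan (Real.log t)
          - (1 / 2) * Real.log (1 + (Real.log t) ^ 2)) := funext hϕ
  set g : ℝ → ℝ := fun x => (-1 + c * Real.arctan (Real.log x)) / x with hg
  have hϕd : ∀ x : ℝ, 0 < x →
      HasDerivAt ϕ ((-1 + c * Real.arctan (Real.log x)) / x) x := by
    intro x hx
    have hlog : HasDerivAt Real.log x⁻¹ x := Real.hasDerivAt_log hx.ne'
    have harc : HasDerivAt (fun y => Real.arctan (Real.log y))
        (1 / (1 + Real.log x ^ 2) * x⁻¹) x :=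
      (Real.hasDerivAt_arctan (Real.log x)).comp x hlog
    have hpos : (0:ℝ) < 1 + Real.log x ^ 2 := by positivity
    have hsq : HasDerivAt (fun y => 1 + Real.log y ^ 2)
        ((2 : ℕ) * Real.log x ^ (1:ℕ) * x⁻¹) x :=
      (((hasDerivAt_pow 2 (Real.log x)).comp x hlog)).const_add 1
    have hlog2 : HasDerivAt (fun y => Real.log (1 + Real.log y ^ 2))
        ((1 + Real.log x ^ 2)⁻¹ * ((2 : ℕ) * Real.log x ^ (1:ℕ) * x⁻¹)) x :=
      ((Real.hasDerivAt_log hpos.ne').comp x hsq :)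
    have H := hlog.neg.add (((hlog.mul harc).sub (hlog2.const_mul (1/2 : ℝ))).const_mul c)
    rw [hϕfun]
    convert H using 1
    case e'_4 => rfl
    case e'_5 => rfl
    case e'_8 => rfl
    field_simp
    ring
  have ht_all : ∀ x : ℝ, 0 < x → deriv ϕ x = g x := fun x hx => (hϕd x hx).deriv
  intro t ht1 ht2
  have ht : (0:ℝ) < t := lt_trans (by norm_num) ht1
  have hEq : deriv ϕ =ᶠ[nhds t] g := by
    filter_upwards [eventually_gt_nhds ht] with y hy using ht_all y hy
  have hpos : (0:ℝ) < 1 + Real.log t ^ 2 := by positivity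
  have hnum : HasDerivAt (fun x => -1 + c * Real.arctan (Real.log x))
      (c * (1 / (1 + Real.log t ^ 2) * t⁻¹)) t := by
    have hlog : HasDerivAt Real.log t⁻¹ t := Real.hasDerivAt_log ht.ne'
    exact (((Real.hasDerivAt_arctan (Real.log t)).comp t hlog).const_mul c).const_add (-1)
  have hgd : HasDerivAt g
      ((c * (1 / (1 + Real.log t ^ 2) * t⁻¹) * t
        - (-1 + c * Real.arctan (Real.log t)) * 1) / t ^ 2) t :=
    hnum.div (hasDerivAt_id t) ht.ne'
  have h2 : deriv (deriv ϕ) t = deriv g t := hEq.deriv_eq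
  rw [h2, hgd.deriv, ht_all t ht, hg]
  have key : (c * (1 / (1 + Real.log t ^ 2) * t⁻¹) * t
        - (-1 + c * Real.arctan (Real.log t)) * 1) / t ^ 2
      + (-1 + c * Real.arctan (Real.log t)) / t / t
      = c / ((1 + Real.log t ^ 2) * t ^ 2) := by
    field_simp
    ring
  rw [key]
  positivity
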